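/- For every n ≥ 2, the enhanced power graph P_E(SD_{8n}) of the semidihedral group SD_{8n} of order 8n is not minimally edge connected. -/

import Mathlib

/-- The degree of a vertex: the number of its neighbours. -/
noncomputable def gDeg {V : Type*} (G : SimpleGraph V) (v : V) : ℕ :=
  (G.neighborSet v).ncard

/-- The minimum degree of a graph. -/
noncomputable def minDeg {V : Type*} (G : SimpleGraph V) : ℕ :=
  sInf (Set.range (gDeg G))

/-- The edge connectivity: the minimum size of a set of edges whose removal
disconnects the graph. -/
noncomputable def edgeConn {V : Type*} (G : SimpleGraph V) : ℕ :=
  sInf {n : ℕ | ∃ S : Set (Sym2 V), S ⊆ G.edgeSet ∧ S.ncard = n ∧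
    ¬ (G.deleteEdges S).Connected}

/-- The vertex connectivity: the minimum size of a set of vertices whose removal
disconnects the graph or leaves a single vertex. -/
noncomputable def vertexConn {V : Type*} (G : SimpleGraph V) : ℕ :=
  sInf {n : ℕ | ∃ S : Set V, S.ncard = n ∧ Sᶜ.Nonempty ∧
    (¬ (G.induce Sᶜ).Preconnected ∨ Sᶜ.ncard = 1)}

/-- A graph is minimally edge connected if deleting any edge decreases the
edge connectivity by one. -/
def MinEdgeConnected {V : Type*} (G : SimpleGraph V) : Prop :=
  ∀ e ∈ G.edgeSet, edgeConn (G.deleteEdges {e}) = edgeConn G - 1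

/-- A graph is minimally connected if deleting any edge decreases the
vertex connectivity by one. -/
def MinConnected {V : Type*} (G : SimpleGraph V) : Prop :=
  ∀ e ∈ G.edgeSet, vertexConn (G.deleteEdges {e}) = vertexConn G - 1

/-- The power graph of a group: distinct `x, y` are adjacent iff one is a
natural power of the other. -/
def powerGraph (G : Type*) [Group G] : SimpleGraph G :=
  SimpleGraph.fromRel (fun x y => ∃ m : ℕ, y = x ^ m)

/-- The enhanced power graph of a group: distinct `x, y` are adjacent iff they
lie in a common cyclic subgroup. -/
def enhancedPowerGraph (G : Type*) [Group G] : SimpleGraph G :=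
  SimpleGraph.fromRel
    (fun x y => ∃ z : G, x ∈ Subgroup.zpowers z ∧ y ∈ Subgroup.zpowers z)

/-- The order superpower graph of a group: distinct `x, y` are adjacent iff the
order of one divides the order of the other. -/
def superpowerGraph (G : Type*) [Group G] : SimpleGraph G :=
  SimpleGraph.fromRel (fun x y => orderOf x ∣ orderOf y)

/-- The relators of the semidihedral group
`SD_{8n} = ⟨a, b : a^{4n} = b^2 = e, b a = a^{2n-1} b⟩`, where the generator `a`
is `FreeGroup.of 0` and `b` is `FreeGroup.of 1`. -/
def sdRels (n : ℕ) : Set (FreeGroup (Fin 2)) :=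
  {FreeGroup.of 0 ^ (4 * n), FreeGroup.of 1 ^ 2,
    (FreeGroup.of 1 * FreeGroup.of 0) *
      (FreeGroup.of 0 ^ (2 * n - 1) * FreeGroup.of 1)⁻¹}

/-- The semidihedral group `SD_{8n}` of order `8n`, given by the presentation
`⟨a, b : a^{4n} = b^2 = e, b a = a^{2n-1} b⟩`. -/
abbrev SemidihedralGroup (n : ℕ) : Type := PresentedGroup (sdRels n)

namespace SDAux
variable {n : ℕ}

def rr (n : ℕ) : ZMod (4*n) := 2*(n : ZMod (4*n)) - 1

lemma rr_sq (n : ℕ) : rr n * rr n = 1 := by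
  have h : ((4*n : ℕ) : ZMod (4*n)) = 0 := ZMod.natCast_self _
  push_cast at h
  unfold rr
  linear_combination ((n : ZMod (4*n)) - 1) * h

def pB (n : ℕ) : Equiv.Perm (ZMod (4*n)) :=
  ⟨fun x => rr n * x, fun x => rr n * x,
   fun x => by simp [← mul_assoc, rr_sq], fun x => by simp [← mul_assoc, rr_sq]⟩

def pA (n : ℕ) : Equiv.Perm (ZMod (4*n)) := Equiv.addRight 1

lemma pA_zpow (k : ℤ) : pA n ^ k = Equiv.addRight (k : ZMod (4*n)) := by
  induction k using Int.induction_on with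
  | zero => ext x; simp [pA]
  | succ m ih => ext x; rw [zpow_add_one]; push_cast; simp [ih, pA, Equiv.Perm.mul_apply, add_assoc]; ring
  | pred m ih =>
      ext x
      rw [zpow_sub_one]
      push_cast
      simp [ih, pA, Equiv.Perm.mul_apply]
      ring

lemma pA_pow (k : ℕ) : pA n ^ k = Equiv.addRight (k : ZMod (4*n)) := by
  have := pA_zpow (n := n) (k : ℤ)
  rw [zpow_natCast] at this
  rw [this]; norm_num

lemma rr_cast (hn : 1 ≤ n) : rr n = ((2*n-1 : ℕ) : ZMod (4*n)) := by
  have : (1:ℕ) ≤ 2*n := by omega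
  push_cast [Nat.cast_sub this]
  rfl

def fgen (n : ℕ) : Fin 2 → Equiv.Perm (ZMod (4*n)) := ![pA n, pB n]

lemma relsHold (hn : 2 ≤ n) : ∀ r ∈ sdRels n, FreeGroup.lift (fgen n) r = 1 := by
  intro r hr
  rcases hr with h | h | h
  · subst h
    rw [map_pow, FreeGroup.lift_apply_of]
    show pA n ^ (4*n) = 1
    rw [pA_pow, ZMod.natCast_self]
    ext x; simp
  · subst h
    rw [map_pow, FreeGroup.lift_apply_of]
    show pB n ^ 2 = 1
    ext x
    simp [pB, pow_succ, Equiv.Perm.mul_apply, ← mul_assoc, rr_sq]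
  · rw [Set.mem_singleton_iff] at h
    subst h
    rw [map_mul, map_mul, map_inv, map_mul, map_pow, FreeGroup.lift_apply_of, FreeGroup.lift_apply_of]
    rw [mul_inv_eq_one]
    show pB n * pA n = pA n ^ (2*n-1) * pB n
    rw [pA_pow, ← rr_cast (by omega)]
    ext x
    simp [pB, pA, Equiv.Perm.mul_apply]
    ring

noncomputable def φ (hn : 2 ≤ n) : SemidihedralGroup n →* Equiv.Perm (ZMod (4*n)) :=
  PresentedGroup.toGroup (relsHold hn)

def aa : SemidihedralGroup n := PresentedGroup.of 0
def bb : SemidihedralGroup n := PresentedGroup.of 1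

lemma φ_aa (hn : 2 ≤ n) : φ hn (aa (n := n)) = pA n := PresentedGroup.toGroup.of _
lemma φ_bb (hn : 2 ≤ n) : φ hn (bb (n := n)) = pB n := PresentedGroup.toGroup.of _

lemma mk_rel {α : Type*} {rels : Set (FreeGroup α)} {r : FreeGroup α} (hr : r ∈ rels) :
    PresentedGroup.mk rels r = 1 :=
  (QuotientGroup.eq_one_iff r).mpr (Subgroup.subset_normalClosure hr)

lemma rel_a : (aa (n := n)) ^ (4*n) = 1 := by
  have h := mk_rel (show FreeGroup.of 0 ^ (4*n) ∈ sdRels n from Set.mem_insert _ _)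
  rwa [map_pow] at h

lemma rel_b : (bb (n := n)) ^ 2 = 1 := by
  have h := mk_rel (show FreeGroup.of 1 ^ 2 ∈ sdRels n from
    Set.mem_insert_of_mem _ (Set.mem_insert _ _))
  rwa [map_pow] at h

lemma rel_ba : (bb (n := n)) * aa = aa ^ (2*n-1) * bb := by
  have h := mk_rel (show (FreeGroup.of 1 * FreeGroup.of 0) *
      (FreeGroup.of 0 ^ (2*n-1) * FreeGroup.of 1)⁻¹ ∈ sdRels n from
    Set.mem_insert_of_mem _ (Set.mem_insert_of_mem _ rfl))
  rw [map_mul, map_mul, map_inv, map_mul, map_pow, mul_inv_eq_one] at h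
  exact h

lemma bb_mul_bb : (bb (n := n)) * bb = 1 := by
  have := rel_b (n := n); rwa [pow_two] at this

lemma bb_inv : (bb (n := n))⁻¹ = bb :=
  inv_eq_of_mul_eq_one_right bb_mul_bb

lemma hconj (i : ℤ) : (bb (n := n)) * aa ^ i * bb⁻¹ = aa ^ (((2*n-1 : ℕ) : ℤ) * i) := by
  have h1 : (bb (n := n)) * aa * bb⁻¹ = aa ^ (2*n-1 : ℕ) := by
    rw [rel_ba, mul_inv_cancel_right]
  have h2 := map_zpow (MulAut.conj (bb (n := n))) aa i
  simp only [MulAut.conj_apply] at h2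
  rw [h2, h1, ← zpow_natCast, ← zpow_mul]

lemma bb_mul_aa_zpow (k : ℤ) :
    (bb (n := n)) * aa ^ k = aa ^ (((2*n-1 : ℕ) : ℤ) * k) * bb := by
  rw [← hconj k, inv_mul_cancel_right]

/-- normal form subgroup -/
def nfSet (n : ℕ) : Subgroup (SemidihedralGroup n) where
  carrier := {x | (∃ i : ℤ, x = aa ^ i) ∨ (∃ i : ℤ, x = aa ^ i * bb)}
  one_mem' := Or.inl ⟨0, by simp⟩
  mul_mem' := by
    rintro x y (⟨i, rfl⟩ | ⟨i, rfl⟩) (⟨k, rfl⟩ | ⟨k, rfl⟩)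
    · exact Or.inl ⟨i + k, by rw [zpow_add]⟩
    · exact Or.inr ⟨i + k, by rw [zpow_add, mul_assoc]⟩
    · refine Or.inr ⟨i + ((2*n-1 : ℕ) : ℤ) * k, ?_⟩
      rw [mul_assoc, bb_mul_aa_zpow, ← mul_assoc, ← zpow_add]
    · refine Or.inl ⟨i + ((2*n-1 : ℕ) : ℤ) * k, ?_⟩
      rw [mul_assoc, ← mul_assoc (bb (n := n)), bb_mul_aa_zpow, mul_assoc, bb_mul_bb,
        mul_one, ← zpow_add]
  inv_mem' := by
    rintro x (⟨i, rfl⟩ | ⟨i, rfl⟩)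
    · exact Or.inl ⟨-i, by rw [zpow_neg]⟩
    · refine Or.inr ⟨((2*n-1 : ℕ) : ℤ) * (-i), ?_⟩
      rw [mul_inv_rev, bb_inv, ← zpow_neg, bb_mul_aa_zpow]

lemma normal_form (x : SemidihedralGroup n) :
    (∃ i : ℤ, x = aa ^ i) ∨ (∃ i : ℤ, x = aa ^ i * bb) := by
  refine PresentedGroup.generated_by _ (nfSet n) ?_ x
  intro j
  fin_cases j
  · exact Or.inl ⟨1, (zpow_one _).symm⟩
  · exact Or.inr ⟨0, by rw [zpow_zero, one_mul]; rfl⟩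


lemma aa_zpow_4n : (aa (n := n)) ^ ((4*n : ℕ) : ℤ) = 1 := by
  rw [zpow_natCast]; exact rel_a

lemma haak (hn : 2 ≤ n) (k : ℤ) (h : (aa (n := n)) ^ k = 1) : ((4*n : ℕ) : ℤ) ∣ k := by
  have h2 : (φ hn) ((aa (n := n)) ^ k) = 1 := by rw [h, map_one]
  rw [map_zpow, φ_aa, pA_zpow] at h2
  have h3 : ((0 : ZMod (4*n)) + (k : ZMod (4*n))) = 0 := by
    have := congrFun (congrArg (fun (e : Equiv.Perm (ZMod (4*n))) => (e : ZMod (4*n) → ZMod (4*n))) h2) 0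
    simpa using this
  rw [zero_add] at h3
  exact_mod_cast (ZMod.intCast_zmod_eq_zero_iff_dvd k (4*n)).mp h3

lemma hbak (hn : 2 ≤ n) (k : ℤ) : (aa (n := n)) ^ k ≠ bb := by
  intro h
  have h2 : (φ hn) ((aa (n := n)) ^ k) = (φ hn) bb := by rw [h]
  rw [map_zpow, φ_aa, φ_bb, pA_zpow] at h2
  have e0 : (0 : ZMod (4*n)) + k = rr n * 0 :=
    congrFun (congrArg (fun (e : Equiv.Perm (ZMod (4*n))) => (e : ZMod (4*n) → ZMod (4*n))) h2) 0
  have e1 : (1 : ZMod (4*n)) + k = rr n * 1 :=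
    congrFun (congrArg (fun (e : Equiv.Perm (ZMod (4*n))) => (e : ZMod (4*n) → ZMod (4*n))) h2) 1
  rw [mul_zero] at e0
  rw [mul_one] at e1
  rw [zero_add] at e0
  rw [e0, add_zero] at e1
  -- e1 : 1 = rr n
  have h4 : ((2*n - 2 : ℕ) : ZMod (4*n)) = 0 := by
    have h1 : (1:ℕ) ≤ n := by omega
    have : ((2*n - 2 : ℕ) : ZMod (4*n)) = 2*(n : ZMod (4*n)) - 2 := by
      push_cast [Nat.cast_sub (by omega : (2:ℕ) ≤ 2*n)]; ring
    rw [this]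
    unfold rr at e1
    linear_combination -e1
  have h5 : 4*n ∣ 2*n - 2 := (ZMod.natCast_eq_zero_iff _ _).mp h4
  have h6 : 2*n - 2 ≠ 0 := by omega
  have := Nat.le_of_dvd (Nat.pos_of_ne_zero h6) h5
  omega

lemma bb_ne_one (hn : 2 ≤ n) : (bb (n := n)) ≠ 1 := by
  intro h
  exact hbak hn 0 (by rw [zpow_zero, h])

lemma two_dvd_4n : (2 : ℤ) ∣ ((4*n : ℕ) : ℤ) := ⟨2*(n:ℤ), by push_cast; ring⟩

/-- the key structural fact: anything sharing a cyclic subgroup with `bb` is `1` or `bb`. -/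
lemma key (hn : 2 ≤ n) (z y : SemidihedralGroup n)
    (hbz : bb ∈ Subgroup.zpowers z) (hyz : y ∈ Subgroup.zpowers z) :
    y = 1 ∨ y = bb := by
  obtain ⟨k, hk⟩ := Subgroup.mem_zpowers_iff.mp hbz
  obtain ⟨l, hl⟩ := Subgroup.mem_zpowers_iff.mp hyz
  rcases normal_form z with ⟨i, rfl⟩ | ⟨i, rfl⟩
  · exfalso
    rw [← zpow_mul] at hk
    exact hbak hn (i*k) hk
  · -- z = aa^i * bb
    have m1 : (1 : ℤ) + ((2*n-1 : ℕ) : ℤ) = 2*(n:ℤ) := by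
      push_cast [Nat.cast_sub (by omega : (1:ℕ) ≤ 2*n)]; ring
    have hz2 : (aa (n := n) ^ i * bb) * (aa ^ i * bb) = aa ^ (2*(n:ℤ)*i) := by
      rw [mul_assoc, ← mul_assoc (bb (n := n)), bb_mul_aa_zpow, mul_assoc, bb_mul_bb,
        mul_one, ← zpow_add]
      congr 1
      push_cast [Nat.cast_sub (show (1:ℕ) ≤ 2*n by omega)]
      ring
    rcases Int.even_or_odd i with ⟨t, ht⟩ | ⟨t, ht⟩
    · -- i even : z has order dividing 2
      have hz2' : (aa (n := n) ^ i * bb) * (aa ^ i * bb) = 1 := by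
        rw [hz2, ht]
        have : 2*(n:ℤ)*(t+t) = ((4*n:ℕ):ℤ) * t := by push_cast; ring
        rw [this, zpow_mul, aa_zpow_4n, one_zpow]
      set w := (aa (n := n) ^ i * bb) with hw
      have hpow : ∀ j : ℤ, w ^ j = 1 ∨ w ^ j = w := by
        intro j
        have hsq : w ^ (2:ℤ) = 1 := by
          conv_lhs => rw [show (2:ℤ) = 1+1 by norm_num]
          rw [zpow_add, zpow_one, hz2']
        have hj : w ^ j = w ^ (j % 2) := by
          conv_lhs => rw [← Int.emod_add_mul_ediv j 2]
          rw [zpow_add, zpow_mul, hsq, one_zpow, mul_one]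
        have : j % 2 = 0 ∨ j % 2 = 1 := by omega
        rcases this with h | h
        · left; rw [hj, h, zpow_zero]
        · right; rw [hj, h, zpow_one]
      have hwb : w = bb := by
        rcases hpow k with h | h
        · rw [h] at hk; exact absurd hk.symm (bb_ne_one hn)
        · rw [h] at hk; exact hk
      rcases hpow l with h | h
      · left; rw [← hl, h]
      · right; rw [← hl, h, hwb]
    · -- i odd : impossible
      exfalso
      have hz2' : (aa (n := n) ^ i * bb) * (aa ^ i * bb) = aa ^ (2*(n:ℤ)) := by
        rw [hz2, ht]
        have : 2*(n:ℤ)*(2*t+1) = ((4*n:ℕ):ℤ) * t + 2*(n:ℤ) := by push_cast; ring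
        rw [this, zpow_add, zpow_mul, aa_zpow_4n, one_zpow, one_mul]
      set w := (aa (n := n) ^ i * bb) with hw
      have hsq : w ^ (2:ℤ) = aa ^ (2*(n:ℤ)) := by
        conv_lhs => rw [show (2:ℤ) = 1+1 by norm_num]
        rw [zpow_add, zpow_one, hz2']
      have h4 : w ^ (4:ℤ) = 1 := by
        rw [show (4:ℤ) = 2*2 by norm_num, zpow_mul, hsq, ← zpow_mul]
        have : 2*(n:ℤ)*2 = ((4*n:ℕ):ℤ) := by push_cast; ring
        rw [this, aa_zpow_4n]
      have hk4 : w ^ k = w ^ (k % 4) := by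
        conv_lhs => rw [← Int.emod_add_mul_ediv k 4]
        rw [zpow_add, zpow_mul, h4, one_zpow, mul_one]
      have hmod : k % 4 = 0 ∨ k % 4 = 1 ∨ k % 4 = 2 ∨ k % 4 = 3 := by omega
      have hioddcon : ¬ ((2:ℤ) ∣ i) := by rw [ht]; omega
      rcases hmod with h | h | h | h
      · rw [hk4, h, zpow_zero] at hk; exact bb_ne_one hn hk.symm
      · rw [hk4, h, zpow_one] at hk
        -- aa^i * bb = bb
        have : (aa (n := n)) ^ i = 1 :=
          mul_right_cancel (b := bb (n := n)) (a := aa ^ i) (c := 1)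
            (by rw [one_mul, ← hw]; exact hk)
        exact hioddcon (dvd_trans two_dvd_4n (haak hn i this))
      · rw [hk4, h, hsq] at hk
        exact hbak hn (2*(n:ℤ)) hk
      · rw [hk4, h] at hk
        have h3 : w ^ (3:ℤ) = aa ^ (2*(n:ℤ) + i) * bb := by
          conv_lhs => rw [show (3:ℤ) = 2+1 by norm_num]
          rw [zpow_add, zpow_one, hsq, hw, ← mul_assoc, ← zpow_add]
        rw [h3] at hk
        have : (aa (n := n)) ^ (2*(n:ℤ) + i) = 1 :=
          mul_right_cancel (b := bb (n := n)) (c := 1) (by rw [one_mul]; exact hk)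
        have hdvd := haak hn _ this
        have : (2:ℤ) ∣ 2*(n:ℤ) + i := dvd_trans two_dvd_4n hdvd
        omega


lemma finiteG (hn : 2 ≤ n) : Finite (SemidihedralGroup n) := by
  have h4 : 0 < 4*n := by omega
  apply Finite.of_surjective
    (fun p : Fin (4*n) × Bool =>
      (aa (n := n)) ^ (p.1 : ℕ) * (cond p.2 bb 1))
  intro x
  have reduce : ∀ k : ℤ, ∃ r : Fin (4*n), (aa (n := n)) ^ k = aa ^ ((r : ℕ) : ℤ) := by
    intro k
    have h0 : (0:ℤ) ≤ k % (4*n) := Int.emod_nonneg k (by exact_mod_cast (by omega : (4*n:ℕ) ≠ 0))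
    have hlt : k % (4*n) < (4*n : ℕ) := by
      have := Int.emod_lt_of_pos k (b := 4*(n:ℤ)) (by exact_mod_cast h4)
      exact_mod_cast this
    refine ⟨⟨(k % (4*n)).toNat, by omega⟩, ?_⟩
    have : (( (k % (4*n)).toNat : ℕ) : ℤ) = k % (4*n) := Int.toNat_of_nonneg h0
    rw [this]
    conv_lhs => rw [← Int.emod_add_mul_ediv k (4*n)]
    rw [zpow_add, zpow_mul,
      show (4*(n:ℤ)) = ((4*n : ℕ) : ℤ) by push_cast; ring, aa_zpow_4n, one_zpow, mul_one]
  rcases normal_form x with ⟨i, rfl⟩ | ⟨i, rfl⟩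
  · obtain ⟨r, hr⟩ := reduce i
    exact ⟨(r, false), by simp [hr, zpow_natCast]⟩
  · obtain ⟨r, hr⟩ := reduce i
    exact ⟨(r, true), by simp [hr, zpow_natCast]⟩

/-! ### graph lemmas -/

lemma adj_iff {x y : SemidihedralGroup n} :
    (enhancedPowerGraph (SemidihedralGroup n)).Adj x y ↔
      x ≠ y ∧ ∃ z, x ∈ Subgroup.zpowers z ∧ y ∈ Subgroup.zpowers z := by
  show (SimpleGraph.fromRel _).Adj x y ↔ _
  rw [SimpleGraph.fromRel_adj]
  constructor
  · rintro ⟨h, ⟨z, h1, h2⟩ | ⟨z, h1, h2⟩⟩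
    · exact ⟨h, z, h1, h2⟩
    · exact ⟨h, z, h2, h1⟩
  · rintro ⟨h, z, h1, h2⟩
    exact ⟨h, Or.inl ⟨z, h1, h2⟩⟩

lemma adj_one {x : SemidihedralGroup n} (hx : x ≠ 1) :
    (enhancedPowerGraph (SemidihedralGroup n)).Adj 1 x :=
  adj_iff.mpr ⟨fun h => hx h.symm, x, Subgroup.one_mem _, Subgroup.mem_zpowers x⟩

lemma conn : (enhancedPowerGraph (SemidihedralGroup n)).Connected := by
  have hreach : ∀ v : SemidihedralGroup n,
      (enhancedPowerGraph (SemidihedralGroup n)).Reachable v 1 := by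
    intro v
    by_cases h : v = 1
    · exact h ▸ SimpleGraph.Reachable.refl v
    · exact ((adj_one h).symm).reachable
  exact ⟨fun u v => (hreach u).trans (hreach v).symm⟩

lemma b_only_nbr (hn : 2 ≤ n) {y : SemidihedralGroup n}
    (h : (enhancedPowerGraph (SemidihedralGroup n)).Adj bb y) : y = 1 := by
  rw [adj_iff] at h
  obtain ⟨hne, z, h1, h2⟩ := h
  rcases key hn z y h1 h2 with h | h
  · exact h
  · exact absurd h.symm hne

lemma walk_eq {H : SimpleGraph (SemidihedralGroup n)}
    (hH : ∀ y, H.Adj bb y → False) : ∀ {v} (_ : H.Walk bb v), bb = v := by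
  intro v w
  cases w with
  | nil => rfl
  | cons h p => exact absurd h (hH _)

lemma not_conn (hn : 2 ≤ n) {H : SimpleGraph (SemidihedralGroup n)}
    (hH : ∀ y, H.Adj bb y → False) : ¬ H.Connected := by
  intro hc
  obtain ⟨w⟩ := hc.preconnected bb 1
  exact bb_ne_one hn (walk_eq hH w)

end SDAux

open SDAux


/-- For `n ≥ 2`, the enhanced power graph of the semidihedral group
of order `8n` is not minimally edge connected. -/
theorem stmt_6 (n : ℕ) (hn : 2 ≤ n) :
    ¬ MinEdgeConnected (enhancedPowerGraph (SemidihedralGroup n)) := by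
  intro hmin
  classical
  haveI : Finite (SemidihedralGroup n) := finiteG hn
  set Γ := enhancedPowerGraph (SemidihedralGroup n) with hΓ
  have ha1 : (aa (n := n)) ≠ 1 := by
    intro h
    have := Int.le_of_dvd one_pos (haak hn 1 (by rwa [zpow_one]))
    omega
  have ha2 : (aa (n := n)) ^ (2:ℤ) ≠ 1 := by
    intro h
    have := Int.le_of_dvd (by norm_num) (haak hn 2 h)
    omega
  have ha2a : (aa (n := n)) ^ (2:ℤ) ≠ aa := by
    intro h
    rw [zpow_two] at h
    exact ha1 (mul_left_cancel (a := aa (n := n)) (by rw [mul_one]; exact h))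
  have hb1 : (bb (n := n)) ≠ 1 := bb_ne_one hn
  have hba : (bb (n := n)) ≠ aa := fun h => hbak hn 1 (by rw [zpow_one]; exact h.symm)
  -- the edge {1, bb} is a cut edge of Γ
  have hS1 : ({s((1 : SemidihedralGroup n), bb)} : Set (Sym2 (SemidihedralGroup n)))
      ⊆ Γ.edgeSet := by
    rw [Set.singleton_subset_iff, SimpleGraph.mem_edgeSet]
    exact adj_one hb1
  have hnc1 : ¬ (Γ.deleteEdges {s((1 : SemidihedralGroup n), bb)}).Connected := by
    apply not_conn hn
    intro y hy
    rw [SimpleGraph.deleteEdges_adj] at hy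
    obtain ⟨hadj, hmem⟩ := hy
    have hy1 := b_only_nbr hn hadj
    subst hy1
    exact hmem (by rw [Set.mem_singleton_iff]; exact Sym2.eq_swap)
  have h1T : 1 ∈ {m : ℕ | ∃ S : Set (Sym2 (SemidihedralGroup n)), S ⊆ Γ.edgeSet ∧
      S.ncard = m ∧ ¬ (Γ.deleteEdges S).Connected} :=
    ⟨{s((1 : SemidihedralGroup n), bb)}, hS1, Set.ncard_singleton _, hnc1⟩
  have h0T : 0 ∉ {m : ℕ | ∃ S : Set (Sym2 (SemidihedralGroup n)), S ⊆ Γ.edgeSet ∧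
      S.ncard = m ∧ ¬ (Γ.deleteEdges S).Connected} := by
    rintro ⟨S, hsub, hcard, hnc⟩
    rw [Set.ncard_eq_zero (Set.toFinite S)] at hcard
    rw [hcard, SimpleGraph.deleteEdges_empty] at hnc
    exact hnc conn
  have hEC : edgeConn Γ = sInf {m : ℕ | ∃ S : Set (Sym2 (SemidihedralGroup n)), S ⊆ Γ.edgeSet ∧
      S.ncard = m ∧ ¬ (Γ.deleteEdges S).Connected} := rfl
  have hconnG : edgeConn Γ = 1 := by
    have hle := Nat.sInf_le h1T
    have hmem := Nat.sInf_mem (⟨1, h1T⟩ : Set.Nonempty _)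
    have hne0 : sInf {m : ℕ | ∃ S : Set (Sym2 (SemidihedralGroup n)), S ⊆ Γ.edgeSet ∧
        S.ncard = m ∧ ¬ (Γ.deleteEdges S).Connected} ≠ 0 := fun h => h0T (h ▸ hmem)
    rw [hEC]
    omega
  -- the distinguished edge {1, aa}
  have he : s((1 : SemidihedralGroup n), aa) ∈ Γ.edgeSet :=
    (SimpleGraph.mem_edgeSet Γ).mpr (adj_one ha1)
  have hmin' := hmin _ he
  set Γ' := Γ.deleteEdges {s((1 : SemidihedralGroup n), aa)} with hΓ'
  have hconn' : Γ'.Connected := by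
    have hreach : ∀ v, Γ'.Reachable v 1 := by
      intro v
      by_cases hv1 : v = 1
      · subst hv1; exact SimpleGraph.Reachable.refl 1
      by_cases hva : v = aa
      · subst hva
        have adj1 : Γ'.Adj aa (aa ^ (2:ℤ)) := by
          rw [hΓ', SimpleGraph.deleteEdges_adj]
          constructor
          · exact adj_iff.mpr ⟨fun h => ha2a h.symm, aa, Subgroup.mem_zpowers _,
              Subgroup.mem_zpowers_iff.mpr ⟨2, rfl⟩⟩
          · rw [Set.mem_singleton_iff, Sym2.eq_iff]
            rintro (⟨h, _⟩ | ⟨_, h⟩)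
            · exact ha1 h
            · exact ha2 h
        have adj2 : Γ'.Adj (aa ^ (2:ℤ)) 1 := by
          rw [hΓ', SimpleGraph.deleteEdges_adj]
          refine ⟨(adj_one ha2).symm, ?_⟩
          rw [Set.mem_singleton_iff, Sym2.eq_iff]
          rintro (⟨h, _⟩ | ⟨h, _⟩)
          · exact ha2 h
          · exact ha2a h
        exact adj1.reachable.trans adj2.reachable
      · refine SimpleGraph.Adj.reachable ?_
        rw [hΓ', SimpleGraph.deleteEdges_adj]
        refine ⟨(adj_one hv1).symm, ?_⟩
        rw [Set.mem_singleton_iff, Sym2.eq_iff]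
        rintro (⟨h, _⟩ | ⟨h, _⟩)
        · exact hv1 h
        · exact hva h
    exact ⟨fun u v => (hreach u).trans (hreach v).symm⟩
  have hS1' : ({s((1 : SemidihedralGroup n), bb)} : Set (Sym2 (SemidihedralGroup n)))
      ⊆ Γ'.edgeSet := by
    rw [Set.singleton_subset_iff, SimpleGraph.mem_edgeSet, hΓ', SimpleGraph.deleteEdges_adj]
    refine ⟨adj_one hb1, ?_⟩
    rw [Set.mem_singleton_iff, Sym2.eq_iff]
    rintro (⟨_, h⟩ | ⟨h, _⟩)
    · exact hba h
    · exact ha1 h.symm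
  have hnc1' : ¬ ((Γ'.deleteEdges {s((1 : SemidihedralGroup n), bb)}).Connected) := by
    apply not_conn hn
    intro y hy
    rw [SimpleGraph.deleteEdges_adj] at hy
    obtain ⟨hy1, hmem⟩ := hy
    rw [hΓ', SimpleGraph.deleteEdges_adj] at hy1
    have := b_only_nbr hn hy1.1
    subst this
    exact hmem (by rw [Set.mem_singleton_iff]; exact Sym2.eq_swap)
  have h1T' : 1 ∈ {m : ℕ | ∃ S : Set (Sym2 (SemidihedralGroup n)), S ⊆ Γ'.edgeSet ∧
      S.ncard = m ∧ ¬ (Γ'.deleteEdges S).Connected} :=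
    ⟨{s((1 : SemidihedralGroup n), bb)}, hS1', Set.ncard_singleton _, hnc1'⟩
  have hmemInf := Nat.sInf_mem (⟨1, h1T'⟩ : Set.Nonempty _)
  have h0T' : (0 : ℕ) ∉ {m : ℕ | ∃ S : Set (Sym2 (SemidihedralGroup n)), S ⊆ Γ'.edgeSet ∧
      S.ncard = m ∧ ¬ (Γ'.deleteEdges S).Connected} := by
    rintro ⟨S, hsub, hcard, hnc⟩
    rw [Set.ncard_eq_zero (Set.toFinite S)] at hcard
    rw [hcard, SimpleGraph.deleteEdges_empty] at hnc
    exact hnc hconn'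
  have hzero : sInf {m : ℕ | ∃ S : Set (Sym2 (SemidihedralGroup n)), S ⊆ Γ'.edgeSet ∧
      S.ncard = m ∧ ¬ (Γ'.deleteEdges S).Connected} = 0 := by
    have hEC' : edgeConn Γ' = sInf {m : ℕ | ∃ S : Set (Sym2 (SemidihedralGroup n)),
        S ⊆ Γ'.edgeSet ∧ S.ncard = m ∧ ¬ (Γ'.deleteEdges S).Connected} := rfl
    rw [← hEC', hmin', hconnG]
  exact h0T' (hzero ▸ hmemInf)
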